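/- Let q be a prime power, F a finite field with exactly q elements, and μ an integer with 0 ≤ μ and 2μ < q−1. Then there exists an F-linear code C ⊆ F^q with dim_F C = μ+1 such that C ⊆ C⊥ with respect to the Euclidean inner product and the minimum Hamming weight of the nonzero vectors of C⊥ equals μ+2. -/

import Mathlib

open Polynomial Finset

lemma aux_sum_eval_eq_zero {q : ℕ} {F : Type*} [Field F] [Fintype F]
    (hF : Fintype.card F = q) (e : Fin q ≃ F)
    (p : F[X]) (hp : p.natDegree < q - 1) :
    ∑ i : Fin q, p.eval (e i) = 0 := by
  classical
  rw [Equiv.sum_comp e (fun x => p.eval x)]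
  simp only [Polynomial.eval_eq_sum_range]
  rw [Finset.sum_comm]
  refine Finset.sum_eq_zero fun i hi => ?_
  rw [← Finset.mul_sum, FiniteField.sum_pow_lt_card_sub_one F i (by
    rw [hF]; simp only [Finset.mem_range] at hi; omega), mul_zero]

/-- Theorem 4 (classical ingredient for `𝒞^(q,μ) = QECC(q, q-2μ-2, μ+2, q)`):
for a finite field `F` with `q` elements and `0 ≤ μ` with `2μ < q - 1`, there
exists an `F`-linear code `C ⊆ F^q` of dimension `μ + 1` which is contained in
its Euclidean dual `C⊥`, such that the minimum Hamming weight of the nonzero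
vectors of `C⊥` equals `μ + 2`. -/
theorem exists_weakly_self_dual_mds_full_length
    (q : ℕ) (hq : IsPrimePow q)
    (F : Type*) [Field F] [Fintype F] [DecidableEq F] (hF : Fintype.card F = q)
    (μ : ℕ) (hμ : 2 * μ < q - 1) :
    ∃ C : Submodule F (Fin q → F),
      Module.finrank F C = μ + 1 ∧
      (∀ v ∈ C, ∀ c ∈ C, ∑ i, v i * c i = 0) ∧
      IsLeast {w : ℕ | ∃ v : Fin q → F,
        (∀ c ∈ C, ∑ i, v i * c i = 0) ∧ v ≠ 0 ∧ hammingNorm v = w} (μ + 2) := by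
  classical
  have hq2 : μ + 2 ≤ q := by omega
  set e : Fin q ≃ F := (Fintype.equivFinOfCardEq hF).symm with he
  set P : (Fin (μ + 1) → F) → F[X] := fun a => ∑ j : Fin (μ + 1), C (a j) * X ^ (j : ℕ)
    with hP
  have hPeval : ∀ a x, (P a).eval x = ∑ j : Fin (μ + 1), a j * x ^ (j : ℕ) := by
    intro a x; simp [hP, eval_finset_sum]
  have hPdeg : ∀ a, (P a).natDegree ≤ μ := by
    intro a
    refine Polynomial.natDegree_sum_le_of_forall_le _ _ fun j _ => ?_
    exact (Polynomial.natDegree_C_mul_X_pow_le (a j) j).trans (by omega)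
  have hPcoeff : ∀ a (j : Fin (μ + 1)), (P a).coeff j = a j := by
    intro a j
    simp only [hP, finset_sum_coeff, coeff_C_mul, coeff_X_pow]
    rw [Finset.sum_eq_single j]
    · simp
    · intro k _ hk
      simp [Fin.val_eq_val, Ne.symm hk]
    · simp
  -- key orthogonality computation
  have horth : ∀ p r : F[X], p.natDegree + r.natDegree < q - 1 →
      ∑ i : Fin q, p.eval (e i) * r.eval (e i) = 0 := by
    intro p r h
    have := aux_sum_eval_eq_zero hF e (p * r) ((natDegree_mul_le).trans_lt h)
    simpa [eval_mul] using this
  set E : (Fin (μ + 1) → F) →ₗ[F] (Fin q → F) :=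
    { toFun := fun a i => (P a).eval (e i)
      map_add' := by
        intro a b; funext i
        simp [hPeval, add_mul, Finset.sum_add_distrib]
      map_smul' := by
        intro c a; funext i
        simp [hPeval, Finset.mul_sum, mul_assoc] } with hE
  have hEapp : ∀ a i, E a i = (P a).eval (e i) := fun a i => rfl
  have hEinj : Function.Injective E := by
    rw [injective_iff_map_eq_zero]
    intro a ha
    have hP0 : P a = 0 := by
      refine Polynomial.eq_zero_of_natDegree_lt_card_of_eval_eq_zero (P a) e.injective
        (fun i => ?_) ?_
      · rw [← hEapp, ha]; rfl
      · rw [Fintype.card_fin]; exact lt_of_le_of_lt (hPdeg a) (by omega)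
    funext j
    rw [← hPcoeff a j, hP0, coeff_zero]; rfl
  refine ⟨LinearMap.range E, ?_, ?_, ?_, ?_⟩
  · rw [LinearMap.finrank_range_of_inj hEinj]
    simp [Module.finrank_pi]
  · rintro v ⟨a, rfl⟩ c ⟨b, rfl⟩
    simp only [hEapp]
    exact horth _ _ (by have := hPdeg a; have := hPdeg b; omega)
  · -- μ + 2 is attained
    obtain ⟨S, -, hScard⟩ := Finset.exists_subset_card_eq
      (by rw [Finset.card_univ, hF]; omega : q - (μ + 2) ≤ (univ : Finset F).card)
    set f : F[X] := ∏ s ∈ S, (X - C s) with hf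
    have hfeval : ∀ x, f.eval x = ∏ s ∈ S, (x - s) := by
      intro x; simp [hf, eval_prod]
    have hfdeg : f.natDegree = S.card := by
      rw [hf, Polynomial.natDegree_prod _ _ (fun s _ _h => X_sub_C_ne_zero s _h)]
      simp
    have hnz : ∀ i : Fin q, f.eval (e i) ≠ 0 ↔ e i ∉ S := by
      intro i
      rw [hfeval]
      constructor
      · intro h hmem
        exact h (Finset.prod_eq_zero hmem (sub_self _))
      · intro h h0
        obtain ⟨s, hs, hsx⟩ := Finset.prod_eq_zero_iff.mp h0
        exact h (by rw [sub_eq_zero.mp hsx]; exact hs)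
    refine ⟨fun i => f.eval (e i), ?_, ?_, ?_⟩
    · rintro c ⟨a, rfl⟩
      simp only [hEapp]
      refine horth _ _ ?_
      have := hPdeg a
      rw [hfdeg, hScard]
      omega
    · intro h0
      obtain ⟨x, hx⟩ : ∃ x : F, x ∉ S := by
        by_contra hall
        push_neg at hall
        have : (univ : Finset F).card ≤ S.card := Finset.card_le_card (fun y _ => hall y)
        rw [Finset.card_univ, hF, hScard] at this
        omega
      exact (hnz (e.symm x)).mpr (by simpa using hx) (by simpa using congrFun h0 (e.symm x))
    · have h1 : hammingNorm (fun i => f.eval (e i)) =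
          (univ.filter fun i : Fin q => e i ∉ S).card := by
        unfold hammingNorm
        congr 1
        refine Finset.filter_congr fun i _ => ?_
        simp [hnz i]
      have h2 : (univ.filter fun i : Fin q => e i ∉ S).card
          = (univ.filter fun x : F => x ∉ S).card :=
        Finset.card_equiv e (fun i => by simp)
      have h3 : (univ.filter fun x : F => x ∉ S) = Sᶜ := by ext x; simp
      rw [h1, h2, h3, Finset.card_compl, hF, hScard]
      omega
  · -- lower bound
    rintro w ⟨v, hvorth, hvne, rfl⟩
    by_contra hlt
    push_neg at hlt
    obtain ⟨t, ht'⟩ := Function.ne_iff.mp hvne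
    have ht : v t ≠ 0 := by simpa using ht'
    set T : Finset (Fin q) := univ.filter fun i => v i ≠ 0 with hT
    have htT : t ∈ T := by simp [hT, ht]
    have hTcard : T.card ≤ μ + 1 := by
      have : hammingNorm v = T.card := by
        unfold hammingNorm; rw [hT]
      omega
    set g : F[X] := ∏ s ∈ T.erase t, (X - C (e s)) with hg
    have hgdeg : g.natDegree ≤ μ := by
      rw [hg, Polynomial.natDegree_prod _ _ (fun s _ _h => X_sub_C_ne_zero (e s) _h)]
      simp only [natDegree_X_sub_C, Finset.sum_const, smul_eq_mul, mul_one]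
      have := Finset.card_erase_of_mem htT
      omega
    have hmem : (fun i => g.eval (e i)) ∈ LinearMap.range E := by
      refine ⟨fun j => g.coeff j, ?_⟩
      funext i
      rw [hEapp, hPeval,
        Fin.sum_univ_eq_sum_range (fun j => g.coeff j * (e i) ^ j) (μ + 1),
        ← Polynomial.eval_eq_sum_range' (lt_of_le_of_lt hgdeg (Nat.lt_succ_self μ))]
    have h0 := hvorth _ hmem
    rw [Finset.sum_eq_single t (fun b _ hb => ?_) (fun h => absurd (Finset.mem_univ t) h)] at h0
    · have hgt : g.eval (e t) ≠ 0 := by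
        rw [hg, eval_prod]
        refine Finset.prod_ne_zero_iff.mpr fun s hs => ?_
        simp only [eval_sub, eval_X, eval_C, sub_ne_zero]
        exact fun hts => (Finset.mem_erase.mp hs).1 (e.injective hts.symm)
      rcases mul_eq_zero.mp h0 with h | h
      · exact ht h
      · exact hgt h
    · by_cases hvb : v b = 0
      · rw [hvb, zero_mul]
      · have hbT : b ∈ T.erase t := Finset.mem_erase.mpr ⟨hb, by simp [hT, hvb]⟩
        rw [hg, eval_prod, Finset.prod_eq_zero hbT (by simp), mul_zero]
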